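/- Let A be an associative algebra. Define on the space of continuous functions U, V : [0,∞) → A the product (U ↷ V)(t) := ∫₀ᵗ [U(s), V(t)] ds, where [a,b] = ab − ba. Then ↷ satisfies the left pre-Lie identity: (U ↷ V) ↷ W − U ↷ (V ↷ W) = (V ↷ U) ↷ W − V ↷ (U ↷ W). -/

import Mathlib

open intervalIntegral

/-- On continuous functions `U, V : [0,∞) → A` into an
associative (normed) algebra `A`, the product
`(U ↷ V)(t) := ∫₀ᵗ [U(s), V(t)] ds` satisfies the left pre-Lie identity. -/
theorem integral_commutator_preLie
    {A : Type*} [NormedRing A] [NormedAlgebra ℝ A] [CompleteSpace A]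
    (U V W : ℝ → A) (hU : Continuous U) (hV : Continuous V)
    (hW : Continuous W)
    (pr : (ℝ → A) → (ℝ → A) → (ℝ → A))
    (hpr : ∀ (F G : ℝ → A) (t : ℝ),
      pr F G t = ∫ s in (0:ℝ)..t, (F s * G t - G t * F s)) :
    ∀ t : ℝ, 0 ≤ t →
      pr (pr U V) W t - pr U (pr V W) t
        = pr (pr V U) W t - pr V (pr U W) t := by
  intro t _
  set IU : ℝ → A := fun x => ∫ s in (0:ℝ)..x, U s with hIUdef
  set IV : ℝ → A := fun x => ∫ s in (0:ℝ)..x, V s with hIVdef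
  have dU : ∀ x : ℝ, HasDerivAt IU (U x) x := fun x =>
    intervalIntegral.integral_hasDerivAt_right (hU.intervalIntegrable _ _)
      (hU.stronglyMeasurableAtFilter _ _) hU.continuousAt
  have dV : ∀ x : ℝ, HasDerivAt IV (V x) x := fun x =>
    intervalIntegral.integral_hasDerivAt_right (hV.intervalIntegrable _ _)
      (hV.stronglyMeasurableAtFilter _ _) hV.continuousAt
  have cIU : Continuous IU := by
    rw [continuous_iff_continuousAt]; exact fun x => (dU x).continuousAt
  have cIV : Continuous IV := by
    rw [continuous_iff_continuousAt]; exact fun x => (dV x).continuousAt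
  -- rewrite pr in the convenient form
  have hprf : ∀ (F : ℝ → A), Continuous F → ∀ (G : ℝ → A) (x : ℝ),
      pr F G x = (∫ s in (0:ℝ)..x, F s) * G x - G x * ∫ s in (0:ℝ)..x, F s := by
    intro F hF G x
    rw [hpr,
      intervalIntegral.integral_sub (f := fun s => F s * G x) (g := fun s => G x * F s)
        ((hF.mul continuous_const).intervalIntegrable _ _)
        ((continuous_const.mul hF).intervalIntegrable _ _)]
    have h1 := ContinuousLinearMap.intervalIntegral_comp_comm
      ((ContinuousLinearMap.mul ℝ A).flip (G x)) (hF.intervalIntegrable 0 x : IntervalIntegrable F MeasureTheory.volume 0 x)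
    have h2 := ContinuousLinearMap.intervalIntegral_comp_comm
      ((ContinuousLinearMap.mul ℝ A) (G x)) (hF.intervalIntegrable 0 x : IntervalIntegrable F MeasureTheory.volume 0 x)
    simp only [ContinuousLinearMap.flip_apply, ContinuousLinearMap.mul_apply'] at h1 h2
    rw [h1, h2]
  have hUV : pr U V = fun x => IU x * V x - V x * IU x := funext fun x => hprf U hU V x
  have hVU : pr V U = fun x => IV x * U x - U x * IV x := funext fun x => hprf V hV U x
  have cUV : Continuous (pr U V) := by rw [hUV]; exact (cIU.mul hV).sub (hV.mul cIU)
  have cVU : Continuous (pr V U) := by rw [hVU]; exact (cIV.mul hU).sub (hU.mul cIV)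
  -- key integral identity via FTC
  have key : (∫ s in (0:ℝ)..t, pr U V s) - (∫ s in (0:ℝ)..t, pr V U s)
      = IU t * IV t - IV t * IU t := by
    have hd : ∀ x ∈ Set.uIcc (0:ℝ) t,
        HasDerivAt (fun y => IU y * IV y - IV y * IU y) (pr U V x - pr V U x) x := by
      intro x _
      have h : HasDerivAt (fun y => IU y * IV y - IV y * IU y)
          (U x * IV x + IU x * V x - (V x * IU x + IV x * U x)) x :=
        ((dU x).mul (dV x)).sub ((dV x).mul (dU x))
      convert h using 1
      rw [hUV, hVU]
      noncomm_ring
    have hint : IntervalIntegrable (fun s => pr U V s - pr V U s)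
        MeasureTheory.volume 0 t := (cUV.sub cVU).intervalIntegrable _ _
    have h := intervalIntegral.integral_eq_sub_of_hasDerivAt hd hint
    rw [intervalIntegral.integral_sub (cUV.intervalIntegrable _ _)
      (cVU.intervalIntegrable _ _)] at h
    have h0U : IU 0 = 0 := intervalIntegral.integral_same
    have h0V : IV 0 = 0 := intervalIntegral.integral_same
    simpa [h0U, h0V] using h
  -- rewrite all four terms
  rw [hprf (pr U V) cUV W t, hprf (pr V U) cVU W t, hprf U hU (pr V W) t,
    hprf V hV (pr U W) t, hprf V hV W t, hprf U hU W t]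
  set J : A := ∫ s in (0:ℝ)..t, pr U V s
  set K : A := ∫ s in (0:ℝ)..t, pr V U s
  have hJ : J = K + (IU t * IV t - IV t * IU t) := by
    rw [← key]; abel
  have eU : (∫ s in (0:ℝ)..t, U s) = IU t := rfl
  have eV : (∫ s in (0:ℝ)..t, V s) = IV t := rfl
  rw [hJ, eU, eV]
  noncomm_ring
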